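/- Let F be a totally real number field of degree n with real embeddings τ_1,…,τ_n, and Γ a finite-index subgroup of the totally positive units O_F^{+,×}, acting on the formal power series ring ℂ[[z_1,…,z_n]] by ℂ-algebra automorphisms with u · z_i = τ_i(u) z_i, so that the coefficient of the monomial of multidegree d ∈ ℕ^n in u·f is ∏_i τ_i(u)^{d_i} times that of f. Then a power series f is Γ-invariant if and only if its coefficient at every multidegree d with d not constant (i.e. not of the form (k,…,k)) vanishes; that is, the invariant subring ℂ[[z_1,…,z_n]]^Γ equals ℂ[[w]], the image of the one-variable power series ring under w ↦ z_1⋯z_n. -/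

import Mathlib

open NumberField

/-- The subgroup of totally positive units of the ring of integers of `F`, with respect to a
family `τ` of real embeddings of `F`. -/
noncomputable def totPosUnits (F : Type*) [Field F] [NumberField F] {n : ℕ}
    (τ : Fin n → (F →+* ℝ)) : Subgroup (𝓞 F)ˣ where
  carrier := {u | ∀ i, 0 < τ i (algebraMap (𝓞 F) F u)}
  one_mem' := fun i => by simp
  mul_mem' := fun {a b} ha hb i => by
    rw [Units.val_mul, map_mul, map_mul]
    exact mul_pos (ha i) (hb i)
  inv_mem' := fun {u} hu i => by
    have h1 : τ i (algebraMap (𝓞 F) F u) * τ i (algebraMap (𝓞 F) F ↑u⁻¹) = 1 := by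
      rw [← map_mul, ← map_mul, Units.mul_inv, map_one, map_one]
    nlinarith [hu i]

/-- The action of an `n`-tuple of nonzero reals on `ℂ[[z_1, …, z_n]]`, multiplying the
coefficient at multidegree `d` by `∏ i, r_i^{d_i}`; for `r = (τ_i(u))_i` this is the action
`u · z_i = τ_i(u) z_i` of a totally positive unit. -/
noncomputable def diagAct {n : ℕ} (r : Fin n → ℝ) (f : MvPowerSeries (Fin n) ℂ) :
    MvPowerSeries (Fin n) ℂ :=
  fun d => (∏ i, ((r i : ℝ) : ℂ) ^ (d i)) * MvPowerSeries.coeff d f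


section AuxLemmas

open NumberField.InfinitePlace NumberField.Units NumberField.Units.dirichletUnitTheorem

set_option linter.unusedSectionVars false

section Aux

variable {F : Type*} [Field F] [NumberField F] {n : ℕ}

lemma sigma_bij (hn : n = Module.finrank ℚ F) (τ : Fin n → (F →+* ℝ))
    (hτ : Function.Bijective τ) :
    Function.Bijective (fun i => Complex.ofRealHom.comp (τ i) : Fin n → (F →+* ℂ)) := by
  have hinj : Function.Injective (fun i => Complex.ofRealHom.comp (τ i) : Fin n → (F →+* ℂ)) := by
    intro i j h
    apply hτ.injective
    ext x
    have h2 := congrArg (fun g : F →+* ℂ => g x) h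
    simp only [RingHom.coe_comp, Function.comp_apply] at h2
    exact Complex.ofReal_injective h2
  have hcard : Fintype.card (Fin n) = Fintype.card (F →+* ℂ) := by
    rw [Fintype.card_fin, NumberField.Embeddings.card F ℂ, hn]
  exact (Fintype.bijective_iff_injective_and_card _).mpr ⟨hinj, hcard⟩

lemma isReal_sigma (τ : Fin n → (F →+* ℝ)) (i : Fin n) :
    ComplexEmbedding.IsReal (Complex.ofRealHom.comp (τ i)) := by
  rw [ComplexEmbedding.isReal_iff]
  ext x
  rw [ComplexEmbedding.conjugate_coe_eq]
  simp [Complex.conj_ofReal]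

/-- The infinite place attached to the real embedding `τ i`. -/
noncomputable def placeOf (τ : Fin n → (F →+* ℝ)) (i : Fin n) : InfinitePlace F :=
  InfinitePlace.mk (Complex.ofRealHom.comp (τ i))

lemma placeOf_apply (τ : Fin n → (F →+* ℝ)) (i : Fin n) (x : F) :
    placeOf τ i x = |τ i x| := by
  rw [placeOf, InfinitePlace.apply]
  simp [Complex.norm_real]

lemma placeOf_isReal (τ : Fin n → (F →+* ℝ)) (i : Fin n) : (placeOf τ i).IsReal :=
  isReal_mk_iff.mpr (isReal_sigma τ i)

lemma placeOf_mult (τ : Fin n → (F →+* ℝ)) (i : Fin n) : mult (placeOf τ i) = 1 :=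
  if_pos (placeOf_isReal τ i)

lemma placeOf_bij (hn : n = Module.finrank ℚ F) (τ : Fin n → (F →+* ℝ))
    (hτ : Function.Bijective τ) : Function.Bijective (placeOf τ) := by
  have hσ := sigma_bij hn τ hτ
  constructor
  · intro i j h
    apply hσ.injective
    rcases mk_eq_iff.mp h with h1 | h1
    · exact h1
    · rw [ComplexEmbedding.isReal_iff.mp (isReal_sigma τ i)] at h1
      exact h1
  · intro w
    obtain ⟨i, hi⟩ := hσ.surjective (InfinitePlace.embedding w)
    refine ⟨i, ?_⟩
    rw [placeOf, show Complex.ofRealHom.comp (τ i) = InfinitePlace.embedding w from hi,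
      mk_embedding]

end Aux

section Norm

variable {F : Type*} [Field F] [NumberField F] {n : ℕ}

/-- The product of all real embeddings of a totally positive unit is `1`. -/
lemma prod_tau_eq_one (hn : n = Module.finrank ℚ F) (τ : Fin n → (F →+* ℝ))
    (hτ : Function.Bijective τ) (u : (𝓞 F)ˣ)
    (hu : ∀ i, 0 < τ i (algebraMap (𝓞 F) F u)) :
    ∏ i, τ i (algebraMap (𝓞 F) F u) = 1 := by
  have h := prod_eq_abs_norm (K := F) (algebraMap (𝓞 F) F u)
  rw [show algebraMap (𝓞 F) F u = (u : F) from rfl] at h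
  rw [NumberField.Units.norm, Rat.cast_one] at h
  have q := Equiv.ofBijective _ (placeOf_bij hn τ hτ)
  rw [← Fintype.prod_equiv (Equiv.ofBijective _ (placeOf_bij hn τ hτ))
    (fun i => (placeOf τ i) (u : F) ^ mult (placeOf τ i))
    (fun w => w (u : F) ^ mult w) (fun i => rfl)] at h
  rw [← h]
  apply Finset.prod_congr rfl
  intro i _
  rw [placeOf_mult, pow_one, placeOf_apply,
    abs_of_pos (hu i)]

/-- The sum of logs of the real embeddings of any unit is `0`. -/
lemma sum_log_tau_eq_zero (hn : n = Module.finrank ℚ F) (τ : Fin n → (F →+* ℝ))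
    (hτ : Function.Bijective τ) (v : (𝓞 F)ˣ) :
    ∑ i, Real.log (τ i (algebraMap (𝓞 F) F v)) = 0 := by
  have h := prod_eq_abs_norm (K := F) (algebraMap (𝓞 F) F v)
  rw [show algebraMap (𝓞 F) F v = (v : F) from rfl] at h
  rw [NumberField.Units.norm, Rat.cast_one] at h
  rw [← Fintype.prod_equiv (Equiv.ofBijective _ (placeOf_bij hn τ hτ))
    (fun i => (placeOf τ i) (v : F) ^ mult (placeOf τ i))
    (fun w => w (v : F) ^ mult w) (fun i => rfl)] at h
  have h2 : ∏ i, |τ i ((v : 𝓞 F) : F)| = 1 := by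
    rw [← h]
    exact Finset.prod_congr rfl fun i _ => by
      rw [placeOf_mult, pow_one, placeOf_apply]
  have hne : ∀ i ∈ Finset.univ, |τ i ((v : 𝓞 F) : F)| ≠ (0 : ℝ) := by
    intro i _
    simp only [ne_eq, abs_eq_zero, map_eq_zero]
    exact NumberField.Units.coe_ne_zero v
  have h3 := Real.log_prod hne
  rw [h2, Real.log_one] at h3
  rw [h3]
  exact Finset.sum_congr rfl fun i _ => (Real.log_abs _).symm

end Norm

section Key

variable {F : Type*} [Field F] [NumberField F] {n : ℕ}

/-- For a non-constant multidegree `d`, some unit in `Γ` acts nontrivially on the `d`-th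
coefficient. -/
lemma exists_unit_acts_ne_one (hn : n = Module.finrank ℚ F)
    (τ : Fin n → (F →+* ℝ)) (hτ : Function.Bijective τ)
    (Γ : Subgroup (𝓞 F)ˣ) (hΓ : Γ ≤ totPosUnits F τ)
    (hidx : Γ.relIndex (totPosUnits F τ) ≠ 0)
    (d : Fin n →₀ ℕ) (hd : ¬(∀ i j, d i = d j)) :
    ∃ u ∈ Γ, (∏ i, ((τ i (algebraMap (𝓞 F) F u) : ℝ) : ℂ) ^ (d i)) ≠ 1 := by
  by_contra hcon
  push_neg at hcon
  apply hd
  set k := Γ.relIndex (totPosUnits F τ) with hk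
  -- Step 1: for every unit `v`, `∑ i, d i * log (τ i v) = 0`.
  have key : ∀ v : (𝓞 F)ˣ, ∑ i, (d i : ℝ) * Real.log (τ i (algebraMap (𝓞 F) F v)) = 0 := by
    intro v
    have hv2 : v ^ 2 ∈ totPosUnits F τ := by
      intro i
      have h0 : τ i (algebraMap (𝓞 F) F v) ≠ 0 := by
        simp only [ne_eq, map_eq_zero]
        exact NumberField.Units.coe_ne_zero v
      have : algebraMap (𝓞 F) F ((v ^ 2 : (𝓞 F)ˣ) : 𝓞 F) =
          (algebraMap (𝓞 F) F v) ^ 2 := by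
        rw [Units.val_pow_eq_pow_val, map_pow]
      rw [this, map_pow]
      exact pow_two_pos_of_ne_zero h0
    have hmem : v ^ (2 * k) ∈ Γ := by
      have h1 := Subgroup.pow_index_mem (Γ.subgroupOf (totPosUnits F τ))
        (⟨v ^ 2, hv2⟩ : totPosUnits F τ)
      rw [Subgroup.mem_subgroupOf] at h1
      have h2 : (((⟨v ^ 2, hv2⟩ : totPosUnits F τ) ^
          (Γ.subgroupOf (totPosUnits F τ)).index : totPosUnits F τ) : (𝓞 F)ˣ)
          = v ^ (2 * k) := by
        rw [SubmonoidClass.coe_pow]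
        rw [pow_mul]
        rfl
      rwa [h2] at h1
    have h1 := hcon _ hmem
    have h2 : ∏ i, (τ i (algebraMap (𝓞 F) F ((v ^ (2 * k) : (𝓞 F)ˣ) : 𝓞 F))) ^ (d i)
        = (1 : ℝ) := by
      have := h1
      rw [show (1 : ℂ) = ((1 : ℝ) : ℂ) by norm_num] at this
      push_cast at this ⊢
      exact_mod_cast this
    have htv : ∀ i, τ i (algebraMap (𝓞 F) F ((v ^ (2 * k) : (𝓞 F)ˣ) : 𝓞 F))
        = (τ i (algebraMap (𝓞 F) F v)) ^ (2 * k) := by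
      intro i
      rw [Units.val_pow_eq_pow_val, map_pow, map_pow]
    have hne : ∀ i ∈ Finset.univ,
        (τ i (algebraMap (𝓞 F) F ((v ^ (2 * k) : (𝓞 F)ˣ) : 𝓞 F))) ^ (d i) ≠ (0 : ℝ) := by
      intro i _
      apply pow_ne_zero
      rw [htv i]
      apply pow_ne_zero
      simp only [ne_eq, map_eq_zero]
      exact NumberField.Units.coe_ne_zero v
    have h3 := Real.log_prod hne
    rw [h2, Real.log_one] at h3
    have h4 : ∑ i, (d i : ℝ) * ((2 * k : ℕ) * Real.log (τ i (algebraMap (𝓞 F) F v))) = 0 :=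
      calc ∑ i, (d i : ℝ) * ((2 * k : ℕ) * Real.log (τ i (algebraMap (𝓞 F) F v)))
          = ∑ i, Real.log ((τ i (algebraMap (𝓞 F) F ((v ^ (2 * k) : (𝓞 F)ˣ) : 𝓞 F))) ^ (d i)) :=
            Finset.sum_congr rfl (fun i _ => by
              rw [Real.log_pow, htv i, Real.log_pow])
        _ = 0 := h3.symm
    have h5 : ((2 * k : ℕ) : ℝ) * ∑ i, (d i : ℝ) * Real.log (τ i (algebraMap (𝓞 F) F v))
        = 0 := by
      rw [Finset.mul_sum, ← h4]
      exact Finset.sum_congr rfl fun i _ => by ring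
    have hkne : ((2 * k : ℕ) : ℝ) ≠ 0 := by
      simp only [ne_eq, Nat.cast_eq_zero, mul_eq_zero]
      push_neg
      exact ⟨two_ne_zero, hidx⟩
    exact (mul_eq_zero.mp h5).resolve_left hkne
  -- Step 2: translate to the logarithmic embedding.
  classical
  let q : Fin n ≃ InfinitePlace F := Equiv.ofBijective _ (placeOf_bij hn τ hτ)
  let D : InfinitePlace F → ℝ := fun w => (d (q.symm w) : ℝ)
  have hallreal : ∀ w : InfinitePlace F, w.IsReal := by
    intro w
    obtain ⟨i, hi⟩ := (placeOf_bij hn τ hτ).surjective w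
    rw [← hi]; exact placeOf_isReal τ i
  have hmult : ∀ w : InfinitePlace F, mult w = 1 := fun w => if_pos (hallreal w)
  have hlog : ∀ (v : (𝓞 F)ˣ) (i : Fin n),
      Real.log ((placeOf τ i) (algebraMap (𝓞 F) F v)) =
        Real.log (τ i (algebraMap (𝓞 F) F v)) := by
    intro v i
    rw [placeOf_apply, Real.log_abs]
  have hDsum : ∀ v : (𝓞 F)ˣ,
      ∑ w : InfinitePlace F, D w * Real.log (w (algebraMap (𝓞 F) F v)) = 0 := by
    intro v
    rw [← Fintype.sum_equiv q
      (fun i => D (q i) * Real.log ((q i) (algebraMap (𝓞 F) F v)))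
      (fun w => D w * Real.log (w (algebraMap (𝓞 F) F v))) (fun i => rfl)]
    rw [← key v]
    apply Finset.sum_congr rfl
    intro i _
    rw [show D (q i) = (d i : ℝ) from by simp only [D, Equiv.symm_apply_apply]]
    congr 1
    exact hlog v i
  have hGsum : ∀ v : (𝓞 F)ˣ,
      ∑ w : InfinitePlace F, Real.log (w (algebraMap (𝓞 F) F v)) = 0 := by
    intro v
    rw [← Fintype.sum_equiv q
      (fun i => Real.log ((q i) (algebraMap (𝓞 F) F v)))
      (fun w => Real.log (w (algebraMap (𝓞 F) F v))) (fun i => rfl)]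
    rw [← sum_log_tau_eq_zero hn τ hτ v]
    exact Finset.sum_congr rfl fun i _ => hlog v i
  -- the linear functional
  let e : {w : InfinitePlace F // w ≠ w₀} → ℝ := fun w => D w.1 - D w₀
  let φ : ({w : InfinitePlace F // w ≠ w₀} → ℝ) →ₗ[ℝ] ℝ :=
    ∑ w, e w • LinearMap.proj w
  have hφ_apply : ∀ x, φ x = ∑ w, e w * x w := by
    intro x
    simp [φ, LinearMap.sum_apply, LinearMap.smul_apply, LinearMap.proj_apply, smul_eq_mul]
  have hφ_log : ∀ v : (𝓞 F)ˣ, φ (logEmbedding F (Additive.ofMul v)) = 0 := by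
    intro v
    rw [hφ_apply]
    have hstep : ∀ w : {w : InfinitePlace F // w ≠ w₀},
        e w * (logEmbedding F (Additive.ofMul v)) w =
          (D w.1 - D (w₀ : InfinitePlace F)) * Real.log (w.1 (algebraMap (𝓞 F) F v)) := by
      intro w
      rw [logEmbedding_component, hmult w.1]
      push_cast
      ring
    rw [Finset.sum_congr rfl fun w _ => hstep w]
    rw [← Finset.sum_subtype (Finset.univ.erase (w₀ : InfinitePlace F))
      (fun w => by simp [Finset.mem_erase])
      (fun w => (D w - D (w₀ : InfinitePlace F)) * Real.log (w (algebraMap (𝓞 F) F v)))]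
    have hexp : ∀ w ∈ Finset.univ.erase (w₀ : InfinitePlace F),
        (D w - D (w₀ : InfinitePlace F)) * Real.log (w (algebraMap (𝓞 F) F v)) =
          D w * Real.log (w (algebraMap (𝓞 F) F v)) -
            D (w₀ : InfinitePlace F) * Real.log (w (algebraMap (𝓞 F) F v)) := by
      intro w _; ring
    rw [Finset.sum_congr rfl hexp, Finset.sum_sub_distrib, ← Finset.mul_sum,
      Finset.sum_erase_eq_sub (Finset.mem_univ _), Finset.sum_erase_eq_sub (Finset.mem_univ _),
      hDsum v, hGsum v]
    ring
  -- φ vanishes on the unit lattice, hence everywhere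
  have hφ_lattice : ∀ x ∈ (unitLattice F : Set ({w : InfinitePlace F // w ≠ w₀} → ℝ)),
      φ x = 0 := by
    intro x hx
    obtain ⟨y, -, hy⟩ := Submodule.mem_map.mp hx
    rw [← hy]
    exact hφ_log (Additive.toMul y)
  have hφ_zero : ∀ x, φ x = 0 := by
    intro x
    have hx : x ∈ Submodule.span ℝ (unitLattice F : Set _) := by
      rw [unitLattice_span_eq_top]; trivial
    induction hx using Submodule.span_induction with
    | mem x hx => exact hφ_lattice x hx
    | zero => exact map_zero φ
    | add x y _ _ hx hy => rw [map_add, hx, hy, add_zero]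
    | smul a x _ hx => rw [map_smul, hx, smul_zero]
  -- conclude that D is constant
  have hDw : ∀ w : InfinitePlace F, D w = D (w₀ : InfinitePlace F) := by
    intro w
    by_cases hw : w = (w₀ : InfinitePlace F)
    · rw [hw]
    · have h0 := hφ_zero (Pi.single (⟨w, hw⟩ : {w : InfinitePlace F // w ≠ w₀}) 1)
      rw [hφ_apply] at h0
      simp only [Pi.single_apply, mul_ite, mul_one, mul_zero,
        Finset.sum_ite_eq', Finset.mem_univ, if_true] at h0
      have : e (⟨w, hw⟩ : {w : InfinitePlace F // w ≠ w₀}) = 0 := h0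
      have := sub_eq_zero.mp this
      exact this
  intro i j
  have hi : (d i : ℝ) = D (q i) := by simp only [D, Equiv.symm_apply_apply]
  have hj : (d j : ℝ) = D (q j) := by simp only [D, Equiv.symm_apply_apply]
  have : (d i : ℝ) = (d j : ℝ) := by rw [hi, hj, hDw (q i), hDw (q j)]
  exact_mod_cast this

end Key

end AuxLemmas

/-- Let `Γ` be a finite-index subgroup of the totally positive units of a
totally real field `F` of degree `n`, acting on `ℂ[[z_1, …, z_n]]` by
`u · z_i = τ_i(u) z_i`.  A power series is `Γ`-invariant iff its coefficients at all
non-constant multidegrees vanish, i.e. the invariant subring is `ℂ[[w]]` with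
`w = z_1 ⋯ z_n`. -/
theorem statement16 (F : Type*) [Field F] [NumberField F]
    (n : ℕ) (hn : n = Module.finrank ℚ F) (hn0 : 0 < n)
    (τ : Fin n → (F →+* ℝ)) (hτ : Function.Bijective τ)
    (Γ : Subgroup (𝓞 F)ˣ) (hΓ : Γ ≤ totPosUnits F τ)
    (hidx : Γ.relIndex (totPosUnits F τ) ≠ 0)
    (f : MvPowerSeries (Fin n) ℂ) :
    ((∀ u ∈ Γ, diagAct (fun i => τ i (algebraMap (𝓞 F) F u)) f = f) ↔
      (∀ d : Fin n →₀ ℕ, ¬(∀ i j, d i = d j) → MvPowerSeries.coeff d f = 0)) ∧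
    ((∀ u ∈ Γ, diagAct (fun i => τ i (algebraMap (𝓞 F) F u)) f = f) ↔
      (∃ c : ℕ → ℂ, ∀ d : Fin n →₀ ℕ,
        MvPowerSeries.coeff d f =
          if ∀ i j, d i = d j then c (d ⟨0, hn0⟩) else 0)) := by
  have hvan_iff : (∀ u ∈ Γ, diagAct (fun i => τ i (algebraMap (𝓞 F) F u)) f = f) ↔
      (∀ d : Fin n →₀ ℕ, ¬(∀ i j, d i = d j) → MvPowerSeries.coeff d f = 0) := by
    constructor
    · intro hinv d hd
      obtain ⟨u, hu, hne⟩ := exists_unit_acts_ne_one hn τ hτ Γ hΓ hidx d hd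
      have hcoeff : (∏ i, ((τ i (algebraMap (𝓞 F) F u) : ℝ) : ℂ) ^ (d i)) *
          MvPowerSeries.coeff d f = MvPowerSeries.coeff d f :=
        congrFun (hinv u hu) d
      by_contra h0
      exact hne (mul_right_cancel₀ h0 (by rw [hcoeff, one_mul]))
    · intro hvan u hu
      funext d
      show (∏ i, ((τ i (algebraMap (𝓞 F) F u) : ℝ) : ℂ) ^ (d i)) *
          MvPowerSeries.coeff d f = MvPowerSeries.coeff d f
      by_cases hd : ∀ i j, d i = d j
      · have h1 : ∏ i, τ i (algebraMap (𝓞 F) F u) = 1 :=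
          prod_tau_eq_one hn τ hτ u (hΓ hu)
        have hprod : (∏ i, ((τ i (algebraMap (𝓞 F) F u) : ℝ) : ℂ) ^ (d i)) = 1 := by
          calc ∏ i, ((τ i (algebraMap (𝓞 F) F u) : ℝ) : ℂ) ^ (d i)
              = ∏ i, ((τ i (algebraMap (𝓞 F) F u) : ℝ) : ℂ) ^ (d ⟨0, hn0⟩) :=
                Finset.prod_congr rfl fun i _ => by rw [hd i ⟨0, hn0⟩]
            _ = (∏ i, ((τ i (algebraMap (𝓞 F) F u) : ℝ) : ℂ)) ^ (d ⟨0, hn0⟩) := by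
                rw [Finset.prod_pow]
            _ = 1 := by
                rw [← Complex.ofReal_prod, h1, Complex.ofReal_one, one_pow]
        rw [hprod, one_mul]
      · rw [hvan d hd, mul_zero]
  refine ⟨hvan_iff, hvan_iff.trans ?_⟩
  constructor
  · intro hvan
    refine ⟨fun m => MvPowerSeries.coeff (Finsupp.equivFunOnFinite.symm (fun _ => m)) f,
      fun d => ?_⟩
    by_cases hd : ∀ i j, d i = d j
    · rw [if_pos hd]
      have hdeq : d = Finsupp.equivFunOnFinite.symm (fun _ => d ⟨0, hn0⟩) := by
        ext i
        simpa using hd i ⟨0, hn0⟩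
      exact congrArg (fun e => MvPowerSeries.coeff e f) hdeq
    · rw [if_neg hd]
      exact hvan d hd
  · rintro ⟨c, hc⟩ d hd
    rw [hc d, if_neg hd]
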